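/- Intersection Power Cell Lemma: assume the nondegeneracy condition, that ‖p − q‖ < 2r, and that (B_r(p) ∩ B_r(q)) \ Z_0(α) ≠ ∅ (equivalently, the interior of Z(α) meets B_r(p) ∩ B_r(q)). Then U_α ∩ ∂(B_r(p) ∩ B_r(q)) ⊆ Z_0(α), and the inclusion map of U_α ∩ ∂(B_r(p) ∩ B_r(q)) into Z_0(α) is a homotopy equivalence; indeed, U_α ∩ ∂(B_r(p) ∩ B_r(q)) is a strong deformation retract of Z_0(α), a deformation retraction being given by radial projection from any point y in int Z(α) ∩ B_r(p) ∩ B_r(q) together with the straight-line homotopy. -/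

import Mathlib

open Metric Set

noncomputable section

open scoped RealInnerProductSpace

abbrev Eu (k : ℕ) := EuclideanSpace ℝ (Fin k)

/-- largest root of a quadratic a s^2 + b s + c with a > 0, c ≤ 0 -/
def sRoot (a b c : ℝ) : ℝ := (-b + Real.sqrt (b^2 - 4*a*c)) / (2*a)

lemma disc_nonneg {a b c : ℝ} (ha : 0 < a) (hc : c ≤ 0) : 0 ≤ b^2 - 4*a*c := by nlinarith

lemma sRoot_isRoot {a b c : ℝ} (ha : 0 < a) (hc : c ≤ 0) :
    a * (sRoot a b c)^2 + b * (sRoot a b c) + c = 0 := by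
  have hD := disc_nonneg (b:=b) ha hc
  have hs := Real.sq_sqrt hD
  unfold sRoot
  field_simp
  nlinarith [hs, show Real.sqrt (b ^ 2 - a * 4 * c) ^ 2 = b ^ 2 - a * 4 * c by rw [show a*4*c = 4*a*c by ring]; exact hs]

lemma le_sRoot {a b c t : ℝ} (ha : 0 < a) (hc : c ≤ 0) (ht : a*t^2 + b*t + c ≤ 0) :
    t ≤ sRoot a b c := by
  have hD := disc_nonneg (b:=b) ha hc
  have h1 : (2*a*t + b)^2 ≤ b^2 - 4*a*c := by nlinarith
  have h2 : 2*a*t + b ≤ Real.sqrt (b^2 - 4*a*c) := by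
    calc 2*a*t + b ≤ |2*a*t + b| := le_abs_self _
    _ = Real.sqrt ((2*a*t+b)^2) := (Real.sqrt_sq_eq_abs _).symm
    _ ≤ _ := Real.sqrt_le_sqrt h1
  rw [sRoot, le_div_iff₀ (by linarith)]
  linarith

lemma quad_between {a b c s : ℝ} (ha : 0 < a) (hc : c ≤ 0) (hs : 0 ≤ s)
    (hsS : s ≤ sRoot a b c) : a*s^2 + b*s + c ≤ 0 := by
  set S := sRoot a b c with hSdef
  have hroot : a * S^2 + b * S + c = 0 := sRoot_isRoot ha hc
  rcases eq_or_lt_of_le (hs.trans hsS) with h | h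
  · -- S = 0, so s = 0
    have : s = 0 := le_antisymm (hsS.trans h.symm.le) hs
    simpa [this]
  · -- S > 0
    have key : (a*s^2 + b*s + c) * S = -((S - s) * (a*s*S - c)) := by nlinarith [hroot]
    have h2 : 0 ≤ (S - s) * (a*s*S - c) := by
      apply mul_nonneg (by linarith)
      nlinarith [mul_nonneg (mul_nonneg ha.le hs) h.le]
    nlinarith

lemma sRoot_eq_one {a b c : ℝ} (ha : 0 < a) (hc : c ≤ 0) (h1 : a + b + c = 0) :
    sRoot a b c = 1 := by
  have hge : 1 ≤ sRoot a b c := le_sRoot ha hc (by nlinarith)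
  set S := sRoot a b c
  have hroot : a * S^2 + b * S + c = 0 := sRoot_isRoot ha hc
  have hfact : (S - 1) * (a*S - c) = 0 := by nlinarith
  have : a*S - c > 0 := by nlinarith
  have : S - 1 = 0 := by
    rcases mul_eq_zero.1 hfact with h | h
    · exact h
    · linarith
  linarith

noncomputable section

/-- The distance function to a finite point set `U`. -/
def distU {k : ℕ} (U : Finset (EuclideanSpace ℝ (Fin k))) (x : EuclideanSpace ℝ (Fin k)) : ℝ :=
  Metric.infDist x (U : Set (EuclideanSpace ℝ (Fin k)))

/-- The α-offset `U_α` of a finite point set `U`. -/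
def offsetU {k : ℕ} (U : Finset (EuclideanSpace ℝ (Fin k))) (α : ℝ) :
    Set (EuclideanSpace ℝ (Fin k)) :=
  {x | distU U x ≤ α}

/-- The power cell of the ball `B_r(p)` at level `α`. -/
def pcell {k : ℕ} (U : Finset (EuclideanSpace ℝ (Fin k))) (p : EuclideanSpace ℝ (Fin k))
    (r α : ℝ) : Set (EuclideanSpace ℝ (Fin k)) :=
  {x | ∀ u ∈ U, dist x p ^ 2 - r ^ 2 ≤ dist x u ^ 2 - α ^ 2}

/-- `Z(α) = P(α) ∩ Q(α)`. -/
def Zcell {k : ℕ} (U : Finset (EuclideanSpace ℝ (Fin k))) (p q : EuclideanSpace ℝ (Fin k))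
    (r α : ℝ) : Set (EuclideanSpace ℝ (Fin k)) :=
  pcell U p r α ∩ pcell U q r α

/-- `Z_0(α) = (B_r(p) ∩ B_r(q)) \ int Z(α)`. -/
def Z0 {k : ℕ} (U : Finset (EuclideanSpace ℝ (Fin k))) (p q : EuclideanSpace ℝ (Fin k))
    (r α : ℝ) : Set (EuclideanSpace ℝ (Fin k)) :=
  (closedBall p r ∩ closedBall q r) \ interior (Zcell U p q r α)

lemma dist_param {k : ℕ} (y x c : Eu k) (r s : ℝ) :
    dist (y + s • (x - y)) c ^ 2 - r ^ 2 =
      (‖x - y‖^2) * s^2 + (2*⟪y - c, x - y⟫) * s + (dist y c ^ 2 - r^2) := by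
  have h : y + s • (x - y) - c = (y - c) + s • (x - y) := add_sub_right_comm _ _ _
  rw [dist_eq_norm, dist_eq_norm, h, norm_add_sq_real, real_inner_smul_right, norm_smul,
    Real.norm_eq_abs, mul_pow, sq_abs]
  ring

lemma key_affine {k : ℕ} (x u c : Eu k) :
    dist x c ^ 2 - dist x u ^ 2 = 2*⟪x, u - c⟫ + (‖c‖^2 - ‖u‖^2) := by
  rw [dist_eq_norm, dist_eq_norm, norm_sub_sq_real, norm_sub_sq_real, inner_sub_right]
  ring

lemma pcell_convex {k : ℕ} (U : Finset (Eu k)) (c : Eu k) (r α : ℝ) :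
    Convex ℝ (pcell U c r α) := by
  have : pcell U c r α = ⋂ u ∈ U, {x : Eu k | 2*⟪x, u - c⟫ ≤ r^2 - α^2 - (‖c‖^2 - ‖u‖^2)} := by
    ext x
    simp only [pcell, mem_setOf_eq, mem_iInter]
    constructor
    · intro h u hu
      have := h u hu
      have hk := key_affine x u c
      linarith
    · intro h u hu
      have := h u hu
      have hk := key_affine x u c
      linarith
  rw [this]
  refine convex_iInter₂ fun u hu => convex_halfSpace_le ?_ _
  constructor
  · intro a b; simp only [inner_add_left]; ring
  · intro m a; simp only [real_inner_smul_left, smul_eq_mul]; ring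

lemma Zcell_convex {k : ℕ} (U : Finset (Eu k)) (p q : Eu k) (r α : ℝ) :
    Convex ℝ (Zcell U p q r α) :=
  (pcell_convex U p r α).inter (pcell_convex U q r α)

lemma mem_interior_Zcell {k : ℕ} {U : Finset (Eu k)} {p q : Eu k} {r α : ℝ} {z : Eu k}
    (h : ∀ u ∈ U, dist z p ^ 2 - r ^ 2 < dist z u ^ 2 - α ^ 2 ∧
                  dist z q ^ 2 - r ^ 2 < dist z u ^ 2 - α ^ 2) :
    z ∈ interior (Zcell U p q r α) := by
  set W : Set (Eu k) := ⋂ u ∈ U, {x : Eu k | dist x p ^ 2 - r ^ 2 < dist x u ^ 2 - α ^ 2 ∧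
      dist x q ^ 2 - r ^ 2 < dist x u ^ 2 - α ^ 2} with hW
  have hWopen : IsOpen W := by
    refine isOpen_biInter_finset fun u hu => ?_
    have h1 : Continuous fun x : Eu k => dist x p ^ 2 - r ^ 2 :=
      ((continuous_id.dist continuous_const).pow 2).sub continuous_const
    have h2 : Continuous fun x : Eu k => dist x q ^ 2 - r ^ 2 :=
      ((continuous_id.dist continuous_const).pow 2).sub continuous_const
    have h3 : Continuous fun x : Eu k => dist x u ^ 2 - α ^ 2 :=
      ((continuous_id.dist continuous_const).pow 2).sub continuous_const
    exact (isOpen_lt h1 h3).inter (isOpen_lt h2 h3)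
  have hWZ : W ⊆ Zcell U p q r α := by
    intro w hw
    simp only [hW, mem_iInter, mem_setOf_eq] at hw
    exact ⟨fun u hu => (hw u hu).1.le, fun u hu => (hw u hu).2.le⟩
  have hzW : z ∈ W := by
    simp only [hW, mem_iInter, mem_setOf_eq]
    exact h
  exact interior_mono hWZ (by rwa [hWopen.interior_eq])

/-- points in the balls but outside the interior of `Z` are in the offset -/
lemma offset_of_not_interior {k : ℕ} {U : Finset (Eu k)} (hU : U.Nonempty) {p q : Eu k}
    {r α : ℝ} (hα : 0 ≤ α) {z : Eu k}
    (hzp : z ∈ closedBall p r) (hzq : z ∈ closedBall q r)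
    (hz : z ∉ interior (Zcell U p q r α)) : z ∈ offsetU U α := by
  by_contra hno
  apply hz
  apply mem_interior_Zcell
  intro u hu
  have hd : α < dist z u := by
    by_contra hle
    push_neg at hle
    exact hno (le_trans (infDist_le_dist_of_mem (by exact_mod_cast hu)) hle)
  have hdp : dist z p ≤ r := mem_closedBall.1 hzp
  have hdq : dist z q ≤ r := mem_closedBall.1 hzq
  have h2 : α ^ 2 < dist z u ^ 2 := by nlinarith [dist_nonneg (x := z) (y := u)]
  constructor
  · nlinarith [dist_nonneg (x := z) (y := p)]
  · nlinarith [dist_nonneg (x := z) (y := q)]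

lemma frontier_K_eq {k : ℕ} (p q : Eu k) {r : ℝ} (hr : 0 < r) :
    frontier (closedBall p r ∩ closedBall q r) =
      (closedBall p r ∩ closedBall q r) \ (ball p r ∩ ball q r) := by
  have hcl : IsClosed (closedBall p r ∩ closedBall q r) :=
    isClosed_closedBall.inter isClosed_closedBall
  rw [hcl.frontier_eq, interior_inter, interior_closedBall p hr.ne', interior_closedBall q hr.ne']

/-- the perturbation argument: a tight constraint forces non-interiority -/
lemma not_interior_of_tight {k : ℕ} {U : Finset (Eu k)} {p q : Eu k} {r α : ℝ}
    (hr : 0 < r) (hα : 0 ≤ α) (c : Eu k)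
    (hc : ∀ x, x ∈ Zcell U p q r α → ∀ u ∈ U, dist x c ^ 2 - r ^ 2 ≤ dist x u ^ 2 - α ^ 2)
    (hnd : c ∈ U → α < r) {x u : Eu k} (hu : u ∈ U) (hux : dist x u ≤ α)
    (hxc : dist x c = r) : x ∉ interior (Zcell U p q r α) := by
  intro hint
  have hZ : x ∈ Zcell U p q r α := interior_subset hint
  have h1 : dist x c ^ 2 - r ^ 2 ≤ dist x u ^ 2 - α ^ 2 := hc x hZ u hu
  have hu2 : dist x u ^ 2 ≤ α ^ 2 := by nlinarith [dist_nonneg (x := x) (y := u)]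
  have heq : dist x u ^ 2 = α ^ 2 := by nlinarith [hxc]
  have huc : u ≠ c := by
    intro h
    subst h
    have hlt : α < r := hnd hu
    have : dist x u = α := by nlinarith [dist_nonneg (x := x) (y := u)]
    rw [hxc] at this
    linarith
  -- get a ball inside Zcell
  obtain ⟨ε, hε, hball⟩ : ∃ ε > 0, ball x ε ⊆ Zcell U p q r α := by
    rcases Metric.mem_nhds_iff.1 (mem_interior_iff_mem_nhds.1 hint) with ⟨ε, hε, hb⟩
    exact ⟨ε, hε, hb⟩
  set w : Eu k := u - c with hw
  have hwne : w ≠ 0 := sub_ne_zero.2 huc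
  have hwpos : 0 < ‖w‖ := norm_pos_iff.2 hwne
  set t : ℝ := ε / (2 * ‖w‖) with ht
  have htpos : 0 < t := by positivity
  set z : Eu k := x + t • w with hz
  have hzball : z ∈ ball x ε := by
    rw [mem_ball, dist_eq_norm]
    have : z - x = t • w := by rw [hz]; abel
    rw [this, norm_smul, Real.norm_eq_abs, abs_of_pos htpos, ht]
    rw [div_mul_eq_mul_div, div_lt_iff₀ (by positivity)]
    nlinarith
  have hzZ : z ∈ Zcell U p q r α := hball hzball
  have h2 : dist z c ^ 2 - r ^ 2 ≤ dist z u ^ 2 - α ^ 2 := hc z hzZ u hu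
  -- affine computation
  have hx_aff := key_affine x u c
  have hz_aff := key_affine z u c
  have hinner : ⟪z, u - c⟫ = ⟪x, u - c⟫ + t * ‖w‖^2 := by
    rw [hz, inner_add_left, real_inner_smul_left, hw, real_inner_self_eq_norm_sq]
  rw [hw] at hinner
  nlinarith [hinner, hx_aff, hz_aff, heq, hxc, mul_pos htpos (mul_pos hwpos hwpos)]

/-- Part 1: `U_α ∩ ∂(B∩B) ⊆ Z_0` -/
lemma part1 {k : ℕ} {U : Finset (Eu k)} (hU : U.Nonempty) {p q : Eu k} {r α : ℝ}
    (hr : 0 < r) (hα : 0 ≤ α) (hndp : p ∈ U → α < r) (hndq : q ∈ U → α < r) :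
    offsetU U α ∩ frontier (closedBall p r ∩ closedBall q r) ⊆ Z0 U p q r α := by
  intro x ⟨hxU, hxF⟩
  rw [frontier_K_eq p q hr] at hxF
  obtain ⟨hxK, hxnb⟩ := hxF
  refine ⟨hxK, ?_⟩
  -- get the nearest point u
  obtain ⟨u, hu, hdu⟩ : ∃ u ∈ (U : Set (Eu k)), infDist x (U : Set (Eu k)) = dist x u :=
    (U.finite_toSet.isCompact).exists_infDist_eq_dist (by exact_mod_cast hU) x
  have hux : dist x u ≤ α := by
    rw [← hdu]; exact hxU
  have hu' : u ∈ U := by exact_mod_cast hu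
  -- one of the two sphere conditions holds
  have hcase : dist x p = r ∨ dist x q = r := by
    by_contra hcon
    push_neg at hcon
    exact hxnb ⟨mem_ball.2 (lt_of_le_of_ne (mem_closedBall.1 hxK.1) hcon.1),
      mem_ball.2 (lt_of_le_of_ne (mem_closedBall.1 hxK.2) hcon.2)⟩
  rcases hcase with hxc | hxc
  · exact not_interior_of_tight hr hα p (fun z hz => hz.1) hndp hu' hux hxc
  · exact not_interior_of_tight hr hα q (fun z hz => hz.2) hndq hu' hux hxc

set_option maxHeartbeats 2000000 in
lemma retraction {k : ℕ} {U : Finset (Eu k)} (hU : U.Nonempty) {p q : Eu k} {r α : ℝ}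
    (hr : 0 < r) (hα : 0 ≤ α)
    (hsub : offsetU U α ∩ frontier (closedBall p r ∩ closedBall q r) ⊆ Z0 U p q r α)
    {y : Eu k} (hyI : y ∈ interior (Zcell U p q r α))
    (hyp : y ∈ closedBall p r) (hyq : y ∈ closedBall q r) :
    ∃ j : Eu k → Eu k,
      ContinuousOn j (Z0 U p q r α) ∧
      (∀ x ∈ Z0 U p q r α, ∃ s : ℝ, 0 ≤ s ∧ j x = y + s • (x - y)) ∧
      (∀ x ∈ Z0 U p q r α,
        j x ∈ offsetU U α ∩ frontier (closedBall p r ∩ closedBall q r)) ∧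
      (∀ x ∈ offsetU U α ∩ frontier (closedBall p r ∩ closedBall q r), j x = x) ∧
      (∀ x ∈ Z0 U p q r α, ∀ t ∈ Set.Icc (0:ℝ) 1,
        (1 - t) • x + t • j x ∈ Z0 U p q r α) := by
  classical
  set A : Eu k → ℝ := fun x => ‖x - y‖^2 with hA
  set Bf : Eu k → Eu k → ℝ := fun c x => 2*⟪y - c, x - y⟫ with hB
  set C0 : Eu k → ℝ := fun c => dist y c ^ 2 - r^2 with hC
  set sp : Eu k → ℝ := fun x => sRoot (A x) (Bf p x) (C0 p) with hsp
  set sq' : Eu k → ℝ := fun x => sRoot (A x) (Bf q x) (C0 q) with hsq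
  set sK : Eu k → ℝ := fun x => min (sp x) (sq' x) with hsKdef
  set j : Eu k → Eu k := fun x => y + (sK x) • (x - y) with hj
  have hCp : C0 p ≤ 0 := by
    have := mem_closedBall.1 hyp
    simp only [hC]
    nlinarith [dist_nonneg (x := y) (y := p)]
  have hCq : C0 q ≤ 0 := by
    have := mem_closedBall.1 hyq
    simp only [hC]
    nlinarith [dist_nonneg (x := y) (y := q)]
  have hxy : ∀ x ∈ Z0 U p q r α, x ≠ y := by
    intro x hx h
    exact hx.2 (h ▸ hyI)
  have hApos : ∀ x : Eu k, x ≠ y → 0 < A x := by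
    intro x h
    have h2 : x - y ≠ 0 := sub_ne_zero.2 h
    exact pow_pos (norm_pos_iff.2 h2) 2
  have hparam : ∀ (x c : Eu k) (s : ℝ),
      dist (y + s • (x - y)) c ^ 2 - r ^ 2 = A x * s^2 + Bf c x * s + C0 c := by
    intro x c s
    simpa [hA, hB, hC] using dist_param y x c r s
  have hone : ∀ (x c : Eu k), A x + Bf c x + C0 c = dist x c ^ 2 - r ^ 2 := by
    intro x c
    have h := (hparam x c 1).symm
    simpa using h
  have h1sp : ∀ x ∈ Z0 U p q r α, 1 ≤ sp x := by
    intro x hx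
    refine le_sRoot (hApos x (hxy x hx)) hCp ?_
    have := mem_closedBall.1 hx.1.1
    nlinarith [hone x p, dist_nonneg (x := x) (y := p)]
  have h1sq : ∀ x ∈ Z0 U p q r α, 1 ≤ sq' x := by
    intro x hx
    refine le_sRoot (hApos x (hxy x hx)) hCq ?_
    have := mem_closedBall.1 hx.1.2
    nlinarith [hone x q, dist_nonneg (x := x) (y := q)]
  have h1sK : ∀ x ∈ Z0 U p q r α, 1 ≤ sK x := fun x hx =>
    le_min (h1sp x hx) (h1sq x hx)
  have hjp : ∀ x ∈ Z0 U p q r α, j x ∈ closedBall p r := by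
    intro x hx
    have h0 : (0:ℝ) ≤ sK x := le_trans zero_le_one (h1sK x hx)
    have hq := quad_between (hApos x (hxy x hx)) hCp h0 (min_le_left _ _)
    have := hparam x p (sK x)
    rw [mem_closedBall]
    nlinarith [dist_nonneg (x := j x) (y := p)]
  have hjq : ∀ x ∈ Z0 U p q r α, j x ∈ closedBall q r := by
    intro x hx
    have h0 : (0:ℝ) ≤ sK x := le_trans zero_le_one (h1sK x hx)
    have hq := quad_between (hApos x (hxy x hx)) hCq h0 (min_le_right _ _)
    have := hparam x q (sK x)
    rw [mem_closedBall]
    nlinarith [dist_nonneg (x := j x) (y := q)]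
  have hfr : ∀ x ∈ Z0 U p q r α,
      j x ∈ frontier (closedBall p r ∩ closedBall q r) := by
    intro x hx
    rw [frontier_K_eq p q hr]
    refine ⟨⟨hjp x hx, hjq x hx⟩, ?_⟩
    rcases le_total (sp x) (sq' x) with hle | hle
    · have hmin : sK x = sp x := min_eq_left hle
      have hroot : A x * sp x ^ 2 + Bf p x * sp x + C0 p = 0 :=
        sRoot_isRoot (hApos x (hxy x hx)) hCp
      have hpar : dist (j x) p ^ 2 - r ^ 2 = A x * sK x ^ 2 + Bf p x * sK x + C0 p :=
        hparam x p (sK x)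
      rw [hmin] at hpar
      have hd : dist (j x) p = r := by
        have h1 : dist (j x) p ^ 2 = r ^ 2 := by
          have : dist (j x) p ^ 2 - r ^ 2 = 0 := by rw [hpar]; linarith
          linarith
        nlinarith [dist_nonneg (x := j x) (y := p), hr]
      intro hb
      exact absurd (mem_ball.1 hb.1) (by rw [hd]; exact lt_irrefl r)
    · have hmin : sK x = sq' x := min_eq_right hle
      have hroot : A x * sq' x ^ 2 + Bf q x * sq' x + C0 q = 0 :=
        sRoot_isRoot (hApos x (hxy x hx)) hCq
      have hpar : dist (j x) q ^ 2 - r ^ 2 = A x * sK x ^ 2 + Bf q x * sK x + C0 q :=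
        hparam x q (sK x)
      rw [hmin] at hpar
      have hd : dist (j x) q = r := by
        have h1 : dist (j x) q ^ 2 = r ^ 2 := by
          have : dist (j x) q ^ 2 - r ^ 2 = 0 := by rw [hpar]; linarith
          linarith
        nlinarith [dist_nonneg (x := j x) (y := q), hr]
      intro hb
      exact absurd (mem_ball.1 hb.2) (by rw [hd]; exact lt_irrefl r)
  have hseg : ∀ x ∈ Z0 U p q r α, ∀ t ∈ Set.Icc (0:ℝ) 1,
      (1 - t) • x + t • j x ∈ Z0 U p q r α := by
    intro x hx t ht
    obtain ⟨ht0, ht1⟩ := ht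
    constructor
    · constructor
      · exact (convex_closedBall p r) hx.1.1 (hjp x hx) (by linarith) ht0 (by ring)
      · exact (convex_closedBall q r) hx.1.2 (hjq x hx) (by linarith) ht0 (by ring)
    · set st : ℝ := (1 - t) + t * sK x with hst
      have hid : (1 - t) • x + t • j x = y + st • (x - y) := by
        simp only [hj, hst]
        module
      have hst1 : 1 ≤ st := by nlinarith [h1sK x hx]
      intro hintz
      rw [hid] at hintz
      rcases eq_or_lt_of_le hst1 with hst_eq | hst_lt
      · apply hx.2
        have hxx : y + st • (x - y) = x := by rw [← hst_eq]; simp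
        rwa [hxx] at hintz
      · apply hx.2
        have hzZ : y + st • (x - y) ∈ Zcell U p q r α := interior_subset hintz
        have hstne : st ≠ 0 := by linarith
        have hcombo := (Zcell_convex U p q r α).combo_interior_self_mem_interior hyI hzZ
          (a := 1 - 1/st) (b := 1/st)
          (by
            have : 1/st < 1 := by
              rw [div_lt_one (by linarith)]
              exact hst_lt
            linarith)
          (by positivity) (by ring)
        have hxeq : (1 - 1/st) • y + (1/st) • (y + st • (x - y)) = x := by
          match_scalars <;> (field_simp; try ring)
        rwa [hxeq] at hcombo
  have hjZ0 : ∀ x ∈ Z0 U p q r α, j x ∈ Z0 U p q r α := by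
    intro x hx
    have := hseg x hx 1 ⟨zero_le_one, le_refl 1⟩
    simpa using this
  refine ⟨j, ?_, ?_, ?_, ?_, hseg⟩
  · -- continuity
    have hsubset : Z0 U p q r α ⊆ {x : Eu k | x ≠ y} := fun x hx => hxy x hx
    refine ContinuousOn.mono ?_ hsubset
    have hAc : Continuous A := by
      have : Continuous fun x : Eu k => x - y := continuous_id.sub continuous_const
      exact (this.norm.pow 2)
    have hBc : ∀ c : Eu k, Continuous (Bf c) := by
      intro c
      have : Continuous fun x : Eu k => (⟪y - c, x - y⟫ : ℝ) :=
        Continuous.inner continuous_const (continuous_id.sub continuous_const)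
      exact continuous_const.mul this
    have hAne : ∀ x ∈ {x : Eu k | x ≠ y}, 2 * A x ≠ 0 := by
      intro x hx
      have := hApos x hx
      positivity
    have hroot_cont : ∀ c : Eu k, C0 c ≤ 0 →
        ContinuousOn (fun x => sRoot (A x) (Bf c x) (C0 c)) {x : Eu k | x ≠ y} := by
      intro c _
      unfold sRoot
      apply ContinuousOn.div
      · apply Continuous.continuousOn
        exact ((hBc c).neg).add (Real.continuous_sqrt.comp
          (((hBc c).pow 2).sub ((continuous_const.mul hAc).mul continuous_const)))
      · exact (continuous_const.mul hAc).continuousOn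
      · exact hAne
    have hsK_cont : ContinuousOn sK {x : Eu k | x ≠ y} :=
      (hroot_cont p hCp).inf (hroot_cont q hCq)
    exact continuousOn_const.add
      (hsK_cont.smul ((continuous_id.sub continuous_const).continuousOn))
  · intro x hx
    exact ⟨sK x, le_trans zero_le_one (h1sK x hx), rfl⟩
  · intro x hx
    exact ⟨offset_of_not_interior hU hα (hjp x hx) (hjq x hx) (hjZ0 x hx).2, hfr x hx⟩
  · intro x hx
    have hxZ0 := hsub hx
    have hxy' := hxy x hxZ0
    have hfx := hx.2
    rw [frontier_K_eq p q hr] at hfx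
    obtain ⟨⟨hb1, hb2⟩, hnb⟩ := hfx
    have hcase : dist x p = r ∨ dist x q = r := by
      by_contra hcon
      push_neg at hcon
      exact hnb ⟨mem_ball.2 (lt_of_le_of_ne (mem_closedBall.1 hb1) hcon.1),
        mem_ball.2 (lt_of_le_of_ne (mem_closedBall.1 hb2) hcon.2)⟩
    have hsK1 : sK x = 1 := by
      rcases hcase with hxc | hxc
      · have hsp1 : sp x = 1 := by
          refine sRoot_eq_one (hApos x hxy') hCp ?_
          rw [hone x p, hxc]; ring
        have : 1 ≤ sq' x := h1sq x hxZ0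
        rw [hsKdef]
        simp only [hsp1]
        exact min_eq_left this
      · have hsq1 : sq' x = 1 := by
          refine sRoot_eq_one (hApos x hxy') hCq ?_
          rw [hone x q, hxc]; ring
        have : 1 ≤ sp x := h1sp x hxZ0
        rw [hsKdef]
        simp only [hsq1]
        exact min_eq_right this
    simp only [hj, hsK1, one_smul]
    abel

set_option maxHeartbeats 1000000 in
/-- Intersection Power Cell Lemma: `U_α ∩ ∂(B_r(p) ∩ B_r(q)) ⊆ Z_0(α)`, the
inclusion of `U_α ∩ ∂(B_r(p) ∩ B_r(q))` into `Z_0(α)` is a homotopy equivalence, and indeed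
`U_α ∩ ∂(B_r(p) ∩ B_r(q))` is a strong deformation retract of `Z_0(α)`, a deformation
retraction being given by radial projection from any point `y ∈ int Z(α) ∩ B_r(p) ∩ B_r(q)`
together with the straight-line homotopy. -/
theorem stmt6 {k : ℕ} (U : Finset (EuclideanSpace ℝ (Fin k))) (hU : U.Nonempty)
    (p q : EuclideanSpace ℝ (Fin k)) (r : ℝ) (hr : 0 < r) (α : ℝ) (hα : 0 ≤ α)
    (hndp : p ∈ U → α < r) (hndq : q ∈ U → α < r) (hpq : dist p q < 2 * r)
    (hne : ((closedBall p r ∩ closedBall q r) \ Z0 U p q r α).Nonempty) :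
    (offsetU U α ∩ frontier (closedBall p r ∩ closedBall q r) ⊆ Z0 U p q r α) ∧
    (∀ hsub : offsetU U α ∩ frontier (closedBall p r ∩ closedBall q r) ⊆ Z0 U p q r α,
      -- the inclusion map is a homotopy equivalence
      (∃ g : C(↥(Z0 U p q r α),
               ↥(offsetU U α ∩ frontier (closedBall p r ∩ closedBall q r))),
        ((⟨Set.inclusion hsub, continuous_inclusion hsub⟩ :
            C(↥(offsetU U α ∩ frontier (closedBall p r ∩ closedBall q r)),
              ↥(Z0 U p q r α))).comp g).Homotopic (ContinuousMap.id _) ∧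
        (g.comp ⟨Set.inclusion hsub, continuous_inclusion hsub⟩).Homotopic
          (ContinuousMap.id _)) ∧
      -- strong deformation retraction by radial projection and straight-line homotopy
      (∀ y ∈ interior (Zcell U p q r α) ∩ closedBall p r ∩ closedBall q r,
        ∃ j : EuclideanSpace ℝ (Fin k) → EuclideanSpace ℝ (Fin k),
          ContinuousOn j (Z0 U p q r α) ∧
          (∀ x ∈ Z0 U p q r α, ∃ s : ℝ, 0 ≤ s ∧ j x = y + s • (x - y)) ∧
          (∀ x ∈ Z0 U p q r α,
            j x ∈ offsetU U α ∩ frontier (closedBall p r ∩ closedBall q r)) ∧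
          (∀ x ∈ offsetU U α ∩ frontier (closedBall p r ∩ closedBall q r), j x = x) ∧
          (∀ x ∈ Z0 U p q r α, ∀ t ∈ Set.Icc (0:ℝ) 1,
            (1 - t) • x + t • j x ∈ Z0 U p q r α))) := by
  have hp1 := part1 hU hr hα hndp hndq
  refine ⟨hp1, fun hsub => ⟨?_, ?_⟩⟩
  · -- homotopy equivalence
    obtain ⟨y, hyK, hynZ0⟩ := hne
    have hyI : y ∈ interior (Zcell U p q r α) := by
      by_contra h
      exact hynZ0 ⟨hyK, h⟩
    obtain ⟨j, hjc, hjs, hj3, hj4, hj5⟩ := retraction hU hr hα hsub hyI hyK.1 hyK.2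
    have hjcont : Continuous fun x : ↥(Z0 U p q r α) => j ↑x := hjc.restrict
    refine ⟨⟨fun x => ⟨j ↑x, hj3 ↑x x.2⟩, hjcont.subtype_mk _⟩, ?_, ?_⟩
    · -- incl ∘ g homotopic to id
      refine ⟨?_⟩
      have hc1 : Continuous fun z : ↥unitInterval × ↥(Z0 U p q r α) =>
          (1 - (z.1:ℝ)) • (j ↑z.2) + (z.1:ℝ) • (↑z.2 : EuclideanSpace ℝ (Fin k)) := by
        apply Continuous.add
        · exact (continuous_const.sub
            (continuous_subtype_val.comp continuous_fst)).smul (hjcont.comp continuous_snd)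
        · exact (continuous_subtype_val.comp continuous_fst).smul
            (continuous_subtype_val.comp continuous_snd)
      have hmem : ∀ z : ↥unitInterval × ↥(Z0 U p q r α),
          (1 - (z.1:ℝ)) • (j ↑z.2) + (z.1:ℝ) • (↑z.2 : EuclideanSpace ℝ (Fin k)) ∈
            Z0 U p q r α := by
        intro z
        have hz := hj5 ↑z.2 z.2.2 (1 - (z.1:ℝ)) ⟨by linarith [z.1.2.2], by linarith [z.1.2.1]⟩
        have h2 : (1 - (1 - (z.1:ℝ))) • (↑z.2 : EuclideanSpace ℝ (Fin k)) +
            (1 - (z.1:ℝ)) • j ↑z.2 =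
            (1 - (z.1:ℝ)) • (j ↑z.2) + (z.1:ℝ) • (↑z.2 : EuclideanSpace ℝ (Fin k)) := by
          module
        rwa [h2] at hz
      refine { toFun := fun z => ⟨_, hmem z⟩,
                continuous_toFun := hc1.subtype_mk _,
                map_zero_left := ?_, map_one_left := ?_ }
      · intro x
        apply Subtype.ext
        simp
      · intro x
        apply Subtype.ext
        simp
    · -- g ∘ incl = id
      have heq : (ContinuousMap.comp
            ⟨fun x => ⟨j ↑x, hj3 ↑x x.2⟩, hjcont.subtype_mk _⟩
            (⟨Set.inclusion hsub, continuous_inclusion hsub⟩ :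
              C(↥(offsetU U α ∩ frontier (closedBall p r ∩ closedBall q r)),
                ↥(Z0 U p q r α)))) = ContinuousMap.id _ := by
        exact ContinuousMap.ext fun x => Subtype.ext (hj4 x.1 x.2)
      rw [heq]
  · -- the retraction statement
    intro y hy
    exact retraction hU hr hα hsub hy.1.1 hy.1.2 hy.2
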